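/- If B ∈ M_d(ℂ) is positive semidefinite and admits a decomposition B = Σ_n |v_n⟩⟨v_n| where each v_n has at most 2 nonzero coordinates, then the comparison matrix M(B), defined by M(B)_{ii} = |B_{ii}| and M(B)_{ij} = -|B_{ij}| for i ≠ j, is positive semidefinite. -/

import Mathlib

open Matrix Finset
open scoped ComplexOrder

/-- If `B` is PSD with a factor-width-2 decomposition, then its comparison
matrix `M(B)` (with `M(B)_{ii} = |B_{ii}|`, `M(B)_{ij} = -|B_{ij}|` for `i ≠ j`) is PSD. -/
theorem comparison_matrix_posSemidef_of_factor_width_two {d : ℕ}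
    (B : Matrix (Fin d) (Fin d) ℂ) (hB : B.PosSemidef)
    (N : ℕ) (v : Fin N → Fin d → ℂ)
    (hsupp : ∀ n, (univ.filter (fun i => v n i ≠ 0)).card ≤ 2)
    (hdec : B = ∑ n, vecMulVec (v n) (star (v n))) :
    (Matrix.of fun i j =>
      if i = j then ‖B i j‖ else -‖B i j‖ :
      Matrix (Fin d) (Fin d) ℝ).PosSemidef := by
  set M : Matrix (Fin d) (Fin d) ℝ := Matrix.of fun i j =>
      if i = j then ‖B i j‖ else -‖B i j‖ with hM
  have hBent : ∀ i j, B i j = ∑ n, v n i * (starRingEnd ℂ) (v n j) := by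
    intro i j
    rw [hdec]
    simp [vecMulVec_apply, Pi.star_apply, RCLike.star_def, Matrix.sum_apply]
  have habs : ∀ i j, ‖B i j‖ ≤ ∑ n, ‖v n i‖ * ‖v n j‖ := by
    intro i j
    rw [hBent]
    refine le_trans (norm_sum_le _ _) (Finset.sum_le_sum fun n _ => le_of_eq ?_)
    rw [norm_mul, Complex.norm_conj]
  have hdiag : ∀ i, ‖B i i‖ = ∑ n, ‖v n i‖ ^ 2 := by
    intro i
    rw [hBent]
    have h1 : ∀ n : Fin N, v n i * (starRingEnd ℂ) (v n i)
        = ((‖v n i‖ ^ 2 : ℝ) : ℂ) := by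
      intro n
      rw [Complex.mul_conj]
      norm_cast
      rw [Complex.sq_norm]
    rw [Finset.sum_congr rfl fun n _ => h1 n, ← Complex.ofReal_sum, Complex.norm_real,
      Real.norm_of_nonneg (Finset.sum_nonneg fun n _ => sq_nonneg _)]
  rw [posSemidef_iff_dotProduct_mulVec]
  constructor
  · ext i j
    simp only [M, conjTranspose_apply, Matrix.of_apply, star_trivial]
    have hsym : ‖B j i‖ = ‖B i j‖ := by
      have h2 := congrFun (congrFun hB.1 i) j
      rw [conjTranspose_apply] at h2
      rw [← h2, Complex.star_def, Complex.norm_conj]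
    rcases eq_or_ne i j with h | h
    · simp [h]
    · rw [if_neg (Ne.symm h), if_neg h, hsym]
  · intro x
    set w : Fin N → Fin d → ℝ := fun n i => |x i| * ‖v n i‖ with hw
    have key : ∀ i j, (∑ n, ((if i = j then 2 * (w n i * w n j) else 0) - w n i * w n j))
        ≤ x i * M i j * x j := by
      intro i j
      rcases eq_or_ne i j with h | h
      · subst h
        have hthis : x i * M i i * x i = ∑ n, w n i * w n i := by
          have hMii : M i i = ∑ n, ‖v n i‖ ^ 2 := by simp [M, hdiag i]
          rw [hMii, Finset.mul_sum, Finset.sum_mul]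
          refine Finset.sum_congr rfl fun n _ => ?_
          rw [hw]
          simp only []
          rw [sq, show |x i| * ‖v n i‖ * (|x i| * ‖v n i‖)
            = |x i| * |x i| * (‖v n i‖ * ‖v n i‖) from by ring,
            abs_mul_abs_self]
          ring
        rw [hthis]
        refine le_of_eq (Finset.sum_congr rfl fun n _ => ?_)
        rw [if_pos rfl]
        ring
      · have hMij : M i j = -‖B i j‖ := by simp [M, if_neg h]
        have hsum : (∑ n, ((if i = j then 2 * (w n i * w n j) else 0) - w n i * w n j))
            = -∑ n, w n i * w n j := by
          rw [← Finset.sum_neg_distrib]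
          refine Finset.sum_congr rfl fun n _ => ?_
          rw [if_neg h]; ring
        rw [hsum, hMij]
        have h1 : x i * -‖B i j‖ * x j = -(x i * x j * ‖B i j‖) := by
          ring
        rw [h1, neg_le_neg_iff]
        calc x i * x j * ‖B i j‖
            ≤ |x i| * |x j| * ‖B i j‖ := by
              apply mul_le_mul_of_nonneg_right _ (norm_nonneg _)
              calc x i * x j ≤ |x i * x j| := le_abs_self _
                _ = |x i| * |x j| := abs_mul _ _
          _ ≤ |x i| * |x j| * ∑ n, ‖v n i‖ * ‖v n j‖ :=
              mul_le_mul_of_nonneg_left (habs i j)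
                (mul_nonneg (abs_nonneg _) (abs_nonneg _))
          _ = ∑ n, w n i * w n j := by
              rw [Finset.mul_sum]
              refine Finset.sum_congr rfl fun n _ => ?_
              rw [hw]; ring
    have hQ : star x ⬝ᵥ M *ᵥ x = ∑ i, ∑ j, x i * M i j * x j := by
      simp only [star_trivial, dotProduct, mulVec, dotProduct, Finset.mul_sum]
      exact Finset.sum_congr rfl fun i _ => Finset.sum_congr rfl fun j _ => by ring
    rw [hQ]
    have step1 : (∑ i, ∑ j, ∑ n : Fin N,
        ((if i = j then 2 * (w n i * w n j) else 0) - w n i * w n j))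
        ≤ ∑ i, ∑ j, x i * M i j * x j :=
      Finset.sum_le_sum fun i _ => Finset.sum_le_sum fun j _ => key i j
    refine le_trans ?_ step1
    have swap : (∑ i, ∑ j, ∑ n : Fin N,
        ((if i = j then 2 * (w n i * w n j) else 0) - w n i * w n j))
        = ∑ n : Fin N, ∑ i, ∑ j,
        ((if i = j then 2 * (w n i * w n j) else 0) - w n i * w n j) := by
      rw [Finset.sum_congr rfl fun i (_ : i ∈ univ) => Finset.sum_comm]
      exact Finset.sum_comm
    rw [swap]
    refine Finset.sum_nonneg fun n _ => ?_
    have hre : (∑ i, ∑ j, ((if i = j then 2 * (w n i * w n j) else 0) - w n i * w n j))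
        = 2 * (∑ i, w n i ^ 2) - (∑ i, w n i) ^ 2 := by
      have h1 : (∑ i, ∑ j, (if i = j then 2 * (w n i * w n j) else 0))
          = 2 * ∑ i, w n i ^ 2 := by
        simp [Finset.sum_ite_eq, Finset.mul_sum, sq]
      have h2 : (∑ i, ∑ j, w n i * w n j) = (∑ i, w n i) ^ 2 := by
        rw [sq, Finset.sum_mul_sum]
      simp only [Finset.sum_sub_distrib]
      rw [h1, h2]
    rw [hre, sub_nonneg]
    set S := univ.filter (fun i => v n i ≠ 0) with hS
    have hsum : ∑ i, w n i = ∑ i ∈ S, w n i := by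
      rw [hS, Finset.sum_filter_of_ne]
      intro i _ hwi hvi
      exact hwi (by rw [hw]; simp [hvi])
    have hsumsq : ∑ i ∈ S, w n i ^ 2 ≤ ∑ i, w n i ^ 2 :=
      Finset.sum_le_sum_of_subset_of_nonneg (Finset.filter_subset _ _)
        (fun i _ _ => sq_nonneg _)
    calc (∑ i, w n i) ^ 2 = (∑ i ∈ S, w n i) ^ 2 := by rw [hsum]
      _ ≤ S.card * ∑ i ∈ S, w n i ^ 2 := sq_sum_le_card_mul_sum_sq
      _ ≤ 2 * ∑ i ∈ S, w n i ^ 2 := by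
          apply mul_le_mul_of_nonneg_right _ (Finset.sum_nonneg fun i _ => sq_nonneg _)
          exact_mod_cast hsupp n
      _ ≤ 2 * ∑ i, w n i ^ 2 := by linarith
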